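/- For every integer i ≥ 2 and μ, ν ∈ {0,1}, the total weight ω_{μν}(V(Υ_i^{μν})) equals 3(9i − (6+μ+ν)) − 1, and for every vertex z of Υ_i^{μν} the weight of its neighbourhood satisfies ω_{μν}(N(z)) = 9i − (6+μ+ν). -/

import Mathlib

open Finset

/-- Base adjacency relation for the Vega graph: vertices are the vertices of the
Andrasfai graph (inl) together with x,y,a,b,c,u,v,w coded as inr 0,...,inr 7. -/
def vegaBase (i : ℕ) : (Fin (3 * i - 1) ⊕ Fin 8) → (Fin (3 * i - 1) ⊕ Fin 8) → Prop
  | Sum.inl j, Sum.inl l =>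
      (l.val + (3 * i - 1) - j.val) % (3 * i - 1) ∈ Finset.Icc i (2 * i - 1)
  | Sum.inr h, Sum.inl j =>
      ((h = 2 ∨ h = 5) ∧ j.val < i) ∨
      ((h = 3 ∨ h = 6) ∧ i ≤ j.val ∧ j.val < 2 * i) ∨
      ((h = 4 ∨ h = 7) ∧ 2 * i ≤ j.val)
  | Sum.inl _, Sum.inr _ => False
  | Sum.inr h, Sum.inr h' =>
      (h = 0 ∧ h' = 1) ∨ (h = 2 ∧ h' = 6) ∨ (h = 6 ∧ h' = 4) ∨ (h = 4 ∧ h' = 5) ∨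
      (h = 5 ∧ h' = 3) ∨ (h = 3 ∧ h' = 7) ∨ (h = 7 ∧ h' = 2) ∨
      (h = 0 ∧ h' = 2) ∨ (h = 0 ∧ h' = 3) ∨ (h = 0 ∧ h' = 4) ∨
      (h = 1 ∧ h' = 5) ∨ (h = 1 ∧ h' = 6) ∨ (h = 1 ∧ h' = 7)

/-- The Vega graph Υ_i^{00}. -/
def vega (i : ℕ) : SimpleGraph (Fin (3 * i - 1) ⊕ Fin 8) where
  Adj z z' := z ≠ z' ∧ (vegaBase i z z' ∨ vegaBase i z' z)
  symm := ⟨fun _ _ h => ⟨h.1.symm, h.2.symm⟩⟩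
  loopless := ⟨fun _ h => h.1 rfl⟩

/-- The weight ω_{00}. -/
def vegaW00 (i : ℕ) : (Fin (3 * i - 1) ⊕ Fin 8) → ℤ
  | Sum.inl j => if j.val = 0 ∨ j.val = 2 * i - 1 then 1 else 3
  | Sum.inr h => if h = 0 ∨ h = 1 then 1
      else if h = 4 ∨ h = 7 then 3 * (i : ℤ) - 3 else 3 * (i : ℤ) - 2

/-- The correction function f (1 on u,v,w,y; -1 on x). -/
def vegaF (i : ℕ) : (Fin (3 * i - 1) ⊕ Fin 8) → ℤ
  | Sum.inl _ => 0
  | Sum.inr h => if h = 1 ∨ h = 5 ∨ h = 6 ∨ h = 7 then 1 else if h = 0 then -1 else 0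

/-- The correction function g (1 on b, v, v_{i-1}, v_{2i-1}; -1 on v_0). -/
def vegaG (i : ℕ) : (Fin (3 * i - 1) ⊕ Fin 8) → ℤ
  | Sum.inl j => if j.val = i - 1 ∨ j.val = 2 * i - 1 then 1
      else if j.val = 0 then -1 else 0
  | Sum.inr h => if h = 3 ∨ h = 6 then 1 else 0

/-- The weight ω_{μν} = ω_{00} - μ f - ν g. -/
def vegaW (i μ ν : ℕ) (z : Fin (3 * i - 1) ⊕ Fin 8) : ℤ :=
  vegaW00 i z - μ * vegaF i z - ν * vegaG i z

/-- The blow-up of a graph `F` with class sizes given by `w`. -/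
def SimpleGraph.blowup {α : Type*} (F : SimpleGraph α) (w : α → ℕ) :
    SimpleGraph (Σ a, Fin (w a)) where
  Adj x y := F.Adj x.1 y.1
  symm := ⟨fun _ _ h => F.symm.symm _ _ h⟩
  loopless := ⟨fun x h => F.loopless.irrefl x.1 h⟩

/-! ### Auxiliary lemmas -/

lemma vegaCountAux {n : ℕ} (Q : ℕ → Prop) [DecidablePred Q] (c : ℤ) :
    ∑ l : Fin n, (if Q l.val then c else 0) = ((Finset.range n).filter Q).card * c := by
  rw [Fin.sum_univ_eq_sum_range (fun m => if Q m then c else 0), ← Finset.sum_filter,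
    Finset.sum_const, nsmul_eq_mul]

lemma vegaSumInd {α : Type*} [Fintype α] [DecidableEq α] (P : α → Prop) [DecidablePred P]
    (a : α) (c : ℤ) :
    ∑ l, (if P l then (if l = a then c else 0) else 0) = if P a then c else 0 := by
  have h : ∀ l, (if P l then (if l = a then c else 0) else 0)
      = if l = a then (if P a then c else 0) else 0 := fun l => by
    by_cases h : l = a <;> simp [h]
  simp_rw [h]
  simp [Finset.sum_ite_eq' Finset.univ a]

lemma vegaSubVal {i : ℕ} (hi : 2 ≤ i) (a j : Fin (3*i-1)) :
    (a - j).val = (a.val + (3*i-1) - j.val) % (3*i-1) := by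
  rw [Fin.sub_def]
  show ((3*i-1) - j.val + a.val) % (3*i-1) = _
  congr 1
  have := j.isLt
  omega

lemma vegaModResolve {i : ℕ} (hi : 2 ≤ i) {p q : ℕ} (hp : p < 3*i-1) (hq : q < 3*i-1) :
    (p + (3*i-1) - q) % (3*i-1) = if q ≤ p then p - q else p + (3*i-1) - q := by
  split_ifs with h
  · rw [show p + (3*i-1) - q = (p - q) + (3*i-1) by omega, Nat.add_mod_right,
      Nat.mod_eq_of_lt (by omega)]
  · rw [Nat.mod_eq_of_lt (by omega)]

lemma vegaArcCount {i : ℕ} (hi : 2 ≤ i) (j : Fin (3*i-1)) :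
    ∑ l : Fin (3*i-1), (if (l - j).val ∈ Finset.Icc i (2*i-1) then (1:ℤ) else 0) = i := by
  haveI : NeZero (3*i-1) := ⟨by omega⟩
  rw [Fintype.sum_equiv (Equiv.subRight j)
      (fun l => if (l - j).val ∈ Finset.Icc i (2*i-1) then (1:ℤ) else 0)
      (fun d => if d.val ∈ Finset.Icc i (2*i-1) then (1:ℤ) else 0) (fun l => rfl)]
  rw [vegaCountAux (fun m => m ∈ Finset.Icc i (2*i-1)) 1]
  have h : (Finset.range (3*i-1)).filter (fun m => m ∈ Finset.Icc i (2*i-1))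
      = Finset.Icc i (2*i-1) := by
    ext m; simp [Finset.mem_Icc, Finset.mem_range]; omega
  rw [h, Nat.card_Icc, mul_one]
  have : 2*i-1+1-i = i := by omega
  rw [this]

lemma vegaWInl {i : ℕ} (hi : 2 ≤ i) (μ ν : ℕ) (l : Fin (3*i-1)) :
    vegaW i μ ν (Sum.inl l) =
      3 - (2 - (ν:ℤ)) * (if l = (⟨0, by omega⟩ : Fin (3*i-1)) then 1 else 0)
        - (2 + (ν:ℤ)) * (if l = (⟨2*i-1, by omega⟩ : Fin (3*i-1)) then 1 else 0)
        - (ν:ℤ) * (if l = (⟨i-1, by omega⟩ : Fin (3*i-1)) then 1 else 0) := by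
  simp only [vegaW, vegaW00, vegaF, vegaG, Fin.ext_iff]
  split_ifs <;> push_cast <;> ring_nf <;> omega

lemma vegaSumW {i : ℕ} (hi : 2 ≤ i) (μ ν : ℕ) (P : Fin (3*i-1) → Prop) [DecidablePred P] :
    ∑ l, (if P l then vegaW i μ ν (Sum.inl l) else 0)
      = 3 * (∑ l, if P l then (1:ℤ) else 0)
        - (2 - (ν:ℤ)) * (if P ⟨0, by omega⟩ then 1 else 0)
        - (2 + (ν:ℤ)) * (if P ⟨2*i-1, by omega⟩ then 1 else 0)
        - (ν:ℤ) * (if P ⟨i-1, by omega⟩ then 1 else 0) := by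
  have h : ∀ l, (if P l then vegaW i μ ν (Sum.inl l) else 0)
      = 3 * (if P l then (1:ℤ) else 0)
        - (2 - (ν:ℤ)) * (if P l then (if l = ⟨0, by omega⟩ then (1:ℤ) else 0) else 0)
        - (2 + (ν:ℤ)) * (if P l then (if l = ⟨2*i-1, by omega⟩ then (1:ℤ) else 0) else 0)
        - (ν:ℤ) * (if P l then (if l = ⟨i-1, by omega⟩ then (1:ℤ) else 0) else 0) := fun l => by
    by_cases hP : P l
    · simp only [if_pos hP]; rw [vegaWInl hi]; ring
    · simp [hP]
  simp_rw [h]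
  rw [Finset.sum_sub_distrib, Finset.sum_sub_distrib, Finset.sum_sub_distrib,
    ← Finset.mul_sum, ← Finset.mul_sum, ← Finset.mul_sum, ← Finset.mul_sum,
    vegaSumInd, vegaSumInd, vegaSumInd]

lemma vegaAdjIff (i : ℕ) (z z' : Fin (3 * i - 1) ⊕ Fin 8) :
    (vega i).Adj z z' ↔ z ≠ z' ∧ (vegaBase i z z' ∨ vegaBase i z' z) := Iff.rfl

lemma vegaAdjInlInl {i : ℕ} (hi : 2 ≤ i) (j l : Fin (3*i-1)) :
    (vega i).Adj (Sum.inl j) (Sum.inl l) ↔ (l - j).val ∈ Finset.Icc i (2*i-1) := by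
  have hj := j.isLt; have hl := l.isLt
  have e1 : (vega i).Adj (Sum.inl j) (Sum.inl l) ↔
      (Sum.inl j ≠ (Sum.inl l : Fin (3*i-1) ⊕ Fin 8) ∧
        ((l.val + (3*i-1) - j.val) % (3*i-1) ∈ Finset.Icc i (2*i-1) ∨
         (j.val + (3*i-1) - l.val) % (3*i-1) ∈ Finset.Icc i (2*i-1))) := Iff.rfl
  rw [e1, vegaSubVal hi, vegaModResolve hi hl hj, vegaModResolve hi hj hl]
  simp only [ne_eq, Sum.inl.injEq, Fin.ext_iff, Finset.mem_Icc]
  split_ifs <;> omega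

lemma vegaArcMem {i : ℕ} (hi : 2 ≤ i) (a : ℕ) (ha : a < 3*i-1) (j : Fin (3*i-1)) :
    (((⟨a, ha⟩ : Fin (3*i-1)) - j).val ∈ Finset.Icc i (2*i-1)) ↔
      ((j.val ≤ a ∧ i ≤ a - j.val ∧ a - j.val ≤ 2*i-1) ∨
       (a < j.val ∧ i ≤ a + (3*i-1) - j.val ∧ a + (3*i-1) - j.val ≤ 2*i-1)) := by
  have hj := j.isLt
  have hv : ((⟨a, ha⟩ : Fin (3*i-1))).val = a := rfl
  rw [vegaSubVal hi, hv, vegaModResolve hi ha hj, Finset.mem_Icc]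
  split_ifs <;> omega

open scoped Classical in
set_option maxHeartbeats 4000000 in
/-- For i ≥ 2 and μ, ν ∈ {0,1}, the total weight of ω_{μν} on Υ_i^{μν} equals
3(9i-(6+μ+ν)) - 1, and for every vertex z of Υ_i^{μν} (i.e. excluding y when
μ = 1 and v_{2i-1} when ν = 1) the weight of its neighbourhood equals
9i - (6+μ+ν). -/
theorem stmt_16 (i μ ν : ℕ) (hi : 2 ≤ i) (hμ : μ ≤ 1) (hν : ν ≤ 1) :
    (∑ z, vegaW i μ ν z = 3 * (9 * (i : ℤ) - (6 + μ + ν)) - 1) ∧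
      ∀ z : Fin (3 * i - 1) ⊕ Fin 8,
        (μ = 1 → z ≠ Sum.inr 1) →
        (ν = 1 → z ≠ Sum.inl ⟨2 * i - 1, by omega⟩) →
        ∑ z' ∈ (vega i).neighborFinset z, vegaW i μ ν z'
          = 9 * (i : ℤ) - (6 + μ + ν) := by
  constructor
  · rw [Fintype.sum_sum_type]
    have h1 : ∑ l : Fin (3*i-1), vegaW i μ ν (Sum.inl l)
        = ∑ l : Fin (3*i-1), (if True then vegaW i μ ν (Sum.inl l) else 0) := by
      simp
    rw [h1, vegaSumW hi μ ν (fun _ => True), vegaCountAux (fun _ => True) 1,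
      Finset.filter_true, Finset.card_range, Fin.sum_univ_eight]
    simp (config := { decide := true }) only [vegaW, vegaW00, vegaF, vegaG, if_true, if_false,
      mul_zero, mul_one, sub_zero, zero_sub, Nat.cast_ofNat, mul_neg, sub_neg_eq_add]
    omega
  · intro z hz1 hz2
    have hfil : (vega i).neighborFinset z = Finset.univ.filter ((vega i).Adj z) := by
      ext z'; simp [SimpleGraph.mem_neighborFinset]
    rw [hfil, Finset.sum_filter]
    rcases z with j | h
    · -- z = inl j
      have hj := j.isLt
      rw [Fintype.sum_sum_type]
      simp only [vegaAdjInlInl hi j]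
      rw [vegaSumW hi μ ν (fun l => (l - j).val ∈ Finset.Icc i (2*i-1)), vegaArcCount hi j]
      simp only [vegaArcMem hi]
      simp only [vegaAdjIff, vegaBase, Fin.sum_univ_eight]
      simp (config := { decide := true }) only [Sum.inl_ne_inr, ne_eq, not_false_eq_true,
        true_and, false_and, and_false, false_or, or_false, true_or, and_true,
        Sum.inl.injEq, if_false, if_true]
      have hx : ¬(ν = 1 ∧ j.val = 2*i-1) := by
        rintro ⟨h1, h2⟩; exact hz2 h1 (congrArg Sum.inl (Fin.ext h2))
      simp (config := { decide := true }) only [vegaW, vegaW00, vegaF, vegaG, if_true, if_false,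
        mul_zero, mul_one, sub_zero, zero_sub, if_pos, Nat.cast_ofNat, mul_neg, sub_neg_eq_add]
      split_ifs <;> omega
    · -- z = inr h
      rw [Fintype.sum_sum_type]
      fin_cases h
      · -- x
        simp only [vegaAdjIff, vegaBase, Fin.sum_univ_eight]
        simp (config := { decide := true }) only [Sum.inr_ne_inl, ne_eq, not_false_eq_true,
          true_and, false_and, and_false, false_or, or_false, true_or, and_true,
          Sum.inr.injEq, if_false, if_true, Finset.sum_const_zero]
        simp (config := { decide := true }) only [vegaW, vegaW00, vegaF, vegaG, if_true, if_false,
          mul_zero, mul_one, sub_zero, zero_sub, Nat.cast_ofNat, mul_neg, sub_neg_eq_add]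
        omega
      · -- y : requires μ = 0
        have hμ0 : μ = 0 := by
          rcases (by omega : μ = 0 ∨ μ = 1) with h0 | h1
          · exact h0
          · exact absurd rfl (hz1 h1)
        simp only [vegaAdjIff, vegaBase, Fin.sum_univ_eight]
        simp (config := { decide := true }) only [Sum.inr_ne_inl, ne_eq, not_false_eq_true,
          true_and, false_and, and_false, false_or, or_false, true_or, and_true,
          Sum.inr.injEq, if_false, if_true, Finset.sum_const_zero]
        simp (config := { decide := true }) only [vegaW, vegaW00, vegaF, vegaG, if_true, if_false,
          mul_zero, mul_one, sub_zero, zero_sub, Nat.cast_ofNat, mul_neg, sub_neg_eq_add]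
        omega
      · -- a
        simp only [vegaAdjIff, vegaBase, Fin.sum_univ_eight]
        simp (config := { decide := true }) only [Sum.inr_ne_inl, ne_eq, not_false_eq_true,
          true_and, false_and, and_false, false_or, or_false, true_or, and_true,
          Sum.inr.injEq, if_false, if_true]
        rw [vegaSumW hi μ ν (fun l => l.val < i), vegaCountAux (fun m => m < i) 1]
        have hc : (Finset.range (3*i-1)).filter (fun m => m < i) = Finset.range i := by
          ext m; simp [Finset.mem_range]; omega
        rw [hc, Finset.card_range, mul_one]
        simp (config := { decide := true }) only [vegaW, vegaW00, vegaF, vegaG, if_true, if_false,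
          mul_zero, mul_one, sub_zero, zero_sub, Nat.cast_ofNat, mul_neg, sub_neg_eq_add]
        split_ifs <;> omega
      · -- b
        simp only [vegaAdjIff, vegaBase, Fin.sum_univ_eight]
        simp (config := { decide := true }) only [Sum.inr_ne_inl, ne_eq, not_false_eq_true,
          true_and, false_and, and_false, false_or, or_false, true_or, and_true,
          Sum.inr.injEq, if_false, if_true]
        rw [vegaSumW hi μ ν (fun l => i ≤ l.val ∧ l.val < 2*i),
          vegaCountAux (fun m => i ≤ m ∧ m < 2*i) 1]
        have hc : (Finset.range (3*i-1)).filter (fun m => i ≤ m ∧ m < 2*i)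
            = Finset.Ico i (2*i) := by
          ext m; simp [Finset.mem_range, Finset.mem_Ico]; omega
        rw [hc, Nat.card_Ico, mul_one]
        simp (config := { decide := true }) only [vegaW, vegaW00, vegaF, vegaG, if_true, if_false,
          mul_zero, mul_one, sub_zero, zero_sub, Nat.cast_ofNat, mul_neg, sub_neg_eq_add]
        split_ifs <;> omega
      · -- c
        simp only [vegaAdjIff, vegaBase, Fin.sum_univ_eight]
        simp (config := { decide := true }) only [Sum.inr_ne_inl, ne_eq, not_false_eq_true,
          true_and, false_and, and_false, false_or, or_false, true_or, and_true,
          Sum.inr.injEq, if_false, if_true]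
        rw [vegaSumW hi μ ν (fun l => 2*i ≤ l.val), vegaCountAux (fun m => 2*i ≤ m) 1]
        have hc : (Finset.range (3*i-1)).filter (fun m => 2*i ≤ m)
            = Finset.Ico (2*i) (3*i-1) := by
          ext m; simp [Finset.mem_range, Finset.mem_Ico]; omega
        rw [hc, Nat.card_Ico, mul_one]
        simp (config := { decide := true }) only [vegaW, vegaW00, vegaF, vegaG, if_true, if_false,
          mul_zero, mul_one, sub_zero, zero_sub, Nat.cast_ofNat, mul_neg, sub_neg_eq_add]
        split_ifs <;> omega
      · -- u
        simp only [vegaAdjIff, vegaBase, Fin.sum_univ_eight]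
        simp (config := { decide := true }) only [Sum.inr_ne_inl, ne_eq, not_false_eq_true,
          true_and, false_and, and_false, false_or, or_false, true_or, and_true,
          Sum.inr.injEq, if_false, if_true]
        rw [vegaSumW hi μ ν (fun l => l.val < i), vegaCountAux (fun m => m < i) 1]
        have hc : (Finset.range (3*i-1)).filter (fun m => m < i) = Finset.range i := by
          ext m; simp [Finset.mem_range]; omega
        rw [hc, Finset.card_range, mul_one]
        simp (config := { decide := true }) only [vegaW, vegaW00, vegaF, vegaG, if_true, if_false,
          mul_zero, mul_one, sub_zero, zero_sub, Nat.cast_ofNat, mul_neg, sub_neg_eq_add]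
        split_ifs <;> omega
      · -- v
        simp only [vegaAdjIff, vegaBase, Fin.sum_univ_eight]
        simp (config := { decide := true }) only [Sum.inr_ne_inl, ne_eq, not_false_eq_true,
          true_and, false_and, and_false, false_or, or_false, true_or, and_true,
          Sum.inr.injEq, if_false, if_true]
        rw [vegaSumW hi μ ν (fun l => i ≤ l.val ∧ l.val < 2*i),
          vegaCountAux (fun m => i ≤ m ∧ m < 2*i) 1]
        have hc : (Finset.range (3*i-1)).filter (fun m => i ≤ m ∧ m < 2*i)
            = Finset.Ico i (2*i) := by
          ext m; simp [Finset.mem_range, Finset.mem_Ico]; omega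
        rw [hc, Nat.card_Ico, mul_one]
        simp (config := { decide := true }) only [vegaW, vegaW00, vegaF, vegaG, if_true, if_false,
          mul_zero, mul_one, sub_zero, zero_sub, Nat.cast_ofNat, mul_neg, sub_neg_eq_add]
        split_ifs <;> omega
      · -- w
        simp only [vegaAdjIff, vegaBase, Fin.sum_univ_eight]
        simp (config := { decide := true }) only [Sum.inr_ne_inl, ne_eq, not_false_eq_true,
          true_and, false_and, and_false, false_or, or_false, true_or, and_true,
          Sum.inr.injEq, if_false, if_true]
        rw [vegaSumW hi μ ν (fun l => 2*i ≤ l.val), vegaCountAux (fun m => 2*i ≤ m) 1]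
        have hc : (Finset.range (3*i-1)).filter (fun m => 2*i ≤ m)
            = Finset.Ico (2*i) (3*i-1) := by
          ext m; simp [Finset.mem_range, Finset.mem_Ico]; omega
        rw [hc, Nat.card_Ico, mul_one]
        simp (config := { decide := true }) only [vegaW, vegaW00, vegaF, vegaG, if_true, if_false,
          mul_zero, mul_one, sub_zero, zero_sub, Nat.cast_ofNat, mul_neg, sub_neg_eq_add]
        split_ifs <;> omega
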